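/- The ideal J is stable under the operation θ^p, i.e. for every f ∈ J one has f^p − φ(f) ∈ p·J (equivalently, there exists g ∈ J with p·g = f^p − φ(f)). -/

import Mathlib

open MvPolynomial

/-- The ideal `(p) ⊆ ℤ` is prime when `p` is a prime number. -/
instance spanIntPrime (p : ℕ) [hp : Fact p.Prime] : (Ideal.span {(p : ℤ)}).IsPrime :=
  (Ideal.span_singleton_prime (by exact_mod_cast hp.out.ne_zero)).mpr
    (Nat.prime_iff_prime_int.mp hp.out)

/-- `K = ℤ_(p)`, the localization of `ℤ` at the prime ideal `(p)`. -/
abbrev Kloc (p : ℕ) [Fact p.Prime] : Type :=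
  Localization.AtPrime (Ideal.span {(p : ℤ)})

/-- `R = K[x,y]`, the polynomial ring in two variables (`x = X 0`, `y = X 1`) over `K`. -/
abbrev Rpoly (p : ℕ) [Fact p.Prime] : Type :=
  MvPolynomial (Fin 2) (Kloc p)

/-- The polynomials `F_n ∈ ℤ[s,t]` (with `s = X 0`, `t = X 1`), defined recursively by
`F_0(s,t) = s` and `F_n(s,t) = F_{n-1}(s,t)^p - p · F_{n-1}(t,0)`. -/
noncomputable def F (p : ℕ) : ℕ → MvPolynomial (Fin 2) ℤ
  | 0 => X 0
  | n + 1 => F p n ^ p - (p : MvPolynomial (Fin 2) ℤ) * (aeval ![X 1, 0] (F p n))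

/-- `F_n(x,y) ∈ R`: the image of `F_n` under the evaluation `s ↦ x`, `t ↦ y`. -/
noncomputable def Fxy (p : ℕ) [Fact p.Prime] (n : ℕ) : Rpoly p :=
  MvPolynomial.map (Int.castRingHom (Kloc p)) (F p n)

lemma F_eval_t0 (p : ℕ) [hp : Fact p.Prime] (n : ℕ) :
    aeval ![(X 1 : MvPolynomial (Fin 2) ℤ), 0] (F p n) = X 1 ^ p ^ n := by
  induction n with
  | zero => simp [F]
  | succ n ih =>
      rw [F, map_sub, map_pow, map_mul, ih, map_natCast, map_pow, aeval_X]
      simp only [Matrix.cons_val_one, Matrix.head_cons, Matrix.cons_val_zero]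
      rw [zero_pow (pow_ne_zero n hp.out.ne_zero), mul_zero, sub_zero, ← pow_mul, ← pow_succ]

lemma Fxy_succ (p : ℕ) [hp : Fact p.Prime] (n : ℕ) :
    Fxy p (n + 1) = Fxy p n ^ p - (p : Rpoly p) * X 1 ^ p ^ n := by
  rw [Fxy, F, map_sub, map_pow, map_mul, map_natCast, F_eval_t0, map_pow, map_X, Fxy]

lemma phi_Fxy (p : ℕ) [hp : Fact p.Prime] (φ : Rpoly p →ₐ[Kloc p] Rpoly p)
    (hx : φ (X 0) = X 0 ^ p - (p : Rpoly p) * X 1)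
    (hy : φ (X 1) = X 1 ^ p) (n : ℕ) :
    φ (Fxy p n) = Fxy p (n + 1) := by
  induction n with
  | zero =>
      rw [Fxy_succ]
      simp only [Fxy, F, map_X, pow_zero, pow_one]
      exact hx
  | succ n ih =>
      rw [Fxy_succ, map_sub, map_mul, map_pow, map_pow, ih, map_natCast, hy,
        Fxy_succ p (n+1), ← pow_mul, ← pow_succ']

lemma fermat_Kloc (p : ℕ) [hp : Fact p.Prime] (a : Kloc p) :
    ∃ b : Kloc p, (p : Kloc p) * b = a ^ p - a := by
  induction a using Localization.induction_on with
  | H y =>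
    obtain ⟨x, s⟩ := y
    have hdvd : (p : ℤ) ∣ ((s : ℤ) * x ^ p - (s : ℤ) ^ p * x) := by
      have h0 : (((s : ℤ) * x ^ p - (s : ℤ) ^ p * x : ℤ) : ZMod p) = 0 := by
        push_cast
        rw [ZMod.pow_card, ZMod.pow_card]; ring
      exact_mod_cast (ZMod.intCast_zmod_eq_zero_iff_dvd _ p).mp h0
    obtain ⟨m, hm⟩ := hdvd
    refine ⟨Localization.mk m (s ^ p * s), ?_⟩
    rw [Localization.mk_pow, Localization.sub_mk, ← Localization.mk_natCast
      (M := (Ideal.span {(p : ℤ)}).primeCompl) p, Localization.mk_mul, one_mul]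
    congr 1
    push_cast
    linear_combination -hm

lemma frob_lift (p : ℕ) [hp : Fact p.Prime] (φ : Rpoly p →ₐ[Kloc p] Rpoly p)
    (hx : φ (X 0) = X 0 ^ p - (p : Rpoly p) * X 1)
    (hy : φ (X 1) = X 1 ^ p) (g : Rpoly p) :
    ∃ h : Rpoly p, (p : Rpoly p) * h = g ^ p - φ g := by
  induction g using MvPolynomial.induction_on with
  | C a =>
      obtain ⟨b, hb⟩ := fermat_Kloc p a
      refine ⟨C b, ?_⟩
      have hca : φ (C a) = C a := by
        have := φ.commutes a
        simpa only [MvPolynomial.algebraMap_eq] using this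
      rw [hca, ← map_pow, ← map_natCast (C : Kloc p →+* Rpoly p), ← map_mul, ← map_sub, hb]
  | add f g hf hg =>
      obtain ⟨h1, hh1⟩ := hf
      obtain ⟨h2, hh2⟩ := hg
      obtain ⟨r, hr⟩ := exists_add_pow_prime_eq hp.out f g
      refine ⟨h1 + h2 + f * g * r, ?_⟩
      rw [hr, map_add]
      linear_combination hh1 + hh2
  | mul_X f i hf =>
      obtain ⟨h, hh⟩ := hf
      have hXi : ∃ c : Rpoly p, (p : Rpoly p) * c = (X i) ^ p - φ (X i) := by
        fin_cases i
        · exact ⟨X 1, by simp only [Fin.zero_eta, Fin.isValue]; rw [hx]; ring⟩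
        · exact ⟨0, by simp only [Fin.mk_one, Fin.isValue]; rw [hy]; ring⟩
      obtain ⟨c, hc⟩ := hXi
      refine ⟨f ^ p * c + φ (X i) * h, ?_⟩
      rw [map_mul, mul_pow]
      linear_combination f ^ p * hc + φ (X i) * hh

lemma theta_gen (p : ℕ) [hp : Fact p.Prime] (I : Ideal (Rpoly p)) (a b : Rpoly p) (k : ℕ)
    (hk : 1 ≤ k) (ha : (p : Rpoly p) ^ k * a ∈ I) (hb : (p : Rpoly p) ^ (k - 1) * b ∈ I) :
    ∃ g ∈ I, (p : Rpoly p) * g = ((p : Rpoly p) ^ k * a) ^ p - (p : Rpoly p) ^ k * b := by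
  obtain ⟨m, rfl⟩ : ∃ m, k = m + 1 := ⟨k - 1, by omega⟩
  simp only [Nat.add_sub_cancel] at hb
  have hle : m + 2 ≤ (m + 1) * p :=
    le_trans (by omega) (Nat.mul_le_mul_left _ hp.out.two_le)
  obtain ⟨q, hq⟩ : ∃ q, (m + 1) * p = q + (m + 2) :=
    ⟨(m + 1) * p - (m + 2), (Nat.sub_add_cancel hle).symm⟩
  refine ⟨(p : Rpoly p) ^ (q + m + 1) * a ^ p - (p : Rpoly p) ^ m * b, sub_mem ?_
    hb, ?_⟩
  · have hpa : a ^ p = a ^ (p - 1) * a := by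
      rw [← pow_succ]
      congr 1
      have := hp.out.two_le
      omega
    have h2 : (p : Rpoly p) ^ (q + m + 1) * a ^ p =
        ((p : Rpoly p) ^ q * a ^ (p - 1)) * ((p : Rpoly p) ^ (m + 1) * a) := by
      rw [hpa]; ring
    rw [h2]
    exact Ideal.mul_mem_left _ _ ha
  · rw [mul_pow, ← pow_mul, hq]; ring

/-- Let `J ⊆ R` be the ideal generated by the `p^{e-n}·F_n(x,y)` for `0 ≤ n ≤ e`
together with `y^{p^e}`. Then `J` is stable under `θ^p`: for every `f ∈ J` there is
`g ∈ J` with `p·g = f^p - φ(f)`. -/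
theorem J_stable_theta (p : ℕ) [hp : Fact p.Prime]
    (φ : Rpoly p →ₐ[Kloc p] Rpoly p)
    (hx : φ (X 0) = X 0 ^ p - (p : Rpoly p) * X 1)
    (hy : φ (X 1) = X 1 ^ p)
    (e : ℕ) (he : 1 ≤ e)
    (J : Ideal (Rpoly p))
    (hJ : J = Ideal.span
      ((Set.range fun n : Fin (e + 1) => (p : Rpoly p) ^ (e - (n : ℕ)) * Fxy p n) ∪
        {X 1 ^ p ^ e})) :
    ∀ f ∈ J, ∃ g ∈ J, (p : Rpoly p) * g = f ^ p - φ f := by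
  subst hJ
  set gens : Set (Rpoly p) :=
    (Set.range fun n : Fin (e + 1) => (p : Rpoly p) ^ (e - (n : ℕ)) * Fxy p n) ∪
      {X 1 ^ p ^ e} with hgens
  have hgen1 : ∀ n : ℕ, n ≤ e → (p : Rpoly p) ^ (e - n) * Fxy p n ∈ Ideal.span gens := by
    intro n hn
    exact Ideal.subset_span (Or.inl ⟨⟨n, by omega⟩, rfl⟩)
  have hgen2 : (X 1 : Rpoly p) ^ p ^ e ∈ Ideal.span gens :=
    Ideal.subset_span (Or.inr rfl)
  have hFe : Fxy p e ∈ Ideal.span gens := by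
    have := hgen1 e le_rfl
    simpa using this
  have hFe1 : Fxy p (e + 1) ∈ Ideal.span gens := by
    rw [Fxy_succ]
    exact sub_mem (Ideal.pow_mem_of_mem _ hFe p hp.out.pos) (Ideal.mul_mem_left _ _ hgen2)
  have hφJ : ∀ f ∈ Ideal.span gens, φ f ∈ Ideal.span gens := by
    have hle : Ideal.span gens ≤ Ideal.comap (φ : Rpoly p →+* Rpoly p) (Ideal.span gens) := by
      rw [Ideal.span_le]
      rintro g (⟨n, rfl⟩ | rfl)
      · simp only [SetLike.mem_coe, Ideal.mem_comap, RingHom.coe_coe, map_mul, map_pow,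
          map_natCast, phi_Fxy p φ hx hy]
        have hn : (n : ℕ) ≤ e := Nat.lt_succ_iff.mp n.2
        rcases eq_or_lt_of_le hn with h | h
        · rw [h, Nat.sub_self, pow_zero, one_mul]
          exact hFe1
        · have heq : (p : Rpoly p) ^ (e - (n : ℕ)) * Fxy p ((n : ℕ) + 1) =
              (p : Rpoly p) * ((p : Rpoly p) ^ (e - ((n : ℕ) + 1)) * Fxy p ((n : ℕ) + 1)) := by
            rw [show e - (n : ℕ) = (e - ((n : ℕ) + 1)) + 1 from by omega, pow_succ]
            ring
          rw [heq]
          exact Ideal.mul_mem_left _ _ (hgen1 _ (by omega))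
      · simp only [SetLike.mem_coe, Ideal.mem_comap, RingHom.coe_coe, map_pow, hy]
        rw [← pow_mul, mul_comm p (p ^ e), pow_mul]
        exact Ideal.pow_mem_of_mem _ hgen2 p hp.out.pos
    intro f hf
    exact hle hf
  intro f hf
  induction hf using Submodule.span_induction with
  | mem x hxm =>
      rcases hxm with ⟨n, rfl⟩ | rfl
      · have hn : (n : ℕ) ≤ e := Nat.lt_succ_iff.mp n.2
        simp only
        rcases eq_or_lt_of_le hn with h | h
        · refine ⟨X 1 ^ p ^ e, hgen2, ?_⟩
          rw [map_mul, map_pow, map_natCast, phi_Fxy p φ hx hy, h, Nat.sub_self, pow_zero,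
            one_mul, one_mul, Fxy_succ]
          ring
        · have := theta_gen p (Ideal.span gens) (Fxy p (n : ℕ)) (Fxy p ((n : ℕ) + 1))
            (e - (n : ℕ)) (by omega) (hgen1 _ hn)
            (by rw [show e - (n : ℕ) - 1 = e - ((n : ℕ) + 1) from by omega]
                exact hgen1 _ (by omega))
          obtain ⟨g, hg, hge⟩ := this
          refine ⟨g, hg, ?_⟩
          rw [hge, map_mul, map_pow, map_natCast, phi_Fxy p φ hx hy]
      · refine ⟨0, zero_mem _, ?_⟩
        rw [map_pow, hy, ← pow_mul, ← pow_mul, mul_comm (p ^ e) p]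
        ring
  | zero => exact ⟨0, zero_mem _, by simp [zero_pow hp.out.ne_zero]⟩
  | add x y hxm hym ihx ihy =>
      obtain ⟨g1, hg1, he1⟩ := ihx
      obtain ⟨g2, hg2, he2⟩ := ihy
      have hsum := add_pow_prime_eq hp.out x y
      refine ⟨g1 + g2 + x * y * ∑ k ∈ Finset.Ioo 0 p, x ^ (k - 1) * y ^ (p - k - 1) * ((p.choose k / p : ℕ) : Rpoly p),
        add_mem (add_mem hg1 hg2) (Ideal.mul_mem_right _ _ (Ideal.mul_mem_right _ _ hxm)), ?_⟩
      · rw [hsum, map_add]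
        push_cast
        linear_combination he1 + he2
  | smul a x hxm ih =>
      obtain ⟨g, hg, hge⟩ := ih
      obtain ⟨h, hh⟩ := frob_lift p φ hx hy a
      refine ⟨a ^ p * g + φ x * h,
        add_mem (Ideal.mul_mem_left _ _ hg) (Ideal.mul_mem_right _ _ (hφJ x hxm)), ?_⟩
      rw [smul_eq_mul, map_mul, mul_pow]
      linear_combination a ^ p * hge + φ x * hh
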